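/- arXiv:math/0011249 — 2 statements merged into one kernel-verified Lean document; each statement's English description precedes it below -/
import Mathlib

section
/- The reduction-mod-p map is surjective from the integral symplectic group to the symplectic group over Z/pZ: for every prime p, every positive integer g, and every 2g×2g matrix M with entries in Z/pZ that preserves the standard symplectic form over Z/pZ, there exists a 2g×2g integer matrix N preserving the standard symplectic form over Z whose entrywise reduction modulo p equals M. -/
open Finset

open Matrix

/-- The matrix of the standard symplectic form: `(e_i, e_j) = δ_{i+j, 2g+1}` for `i < j`
(with `1`-based indices; here indices are `0`-based, so the condition reads `i + j = 2g - 1`). -/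
def sympJ (g : ℕ) (R : Type*) [Ring R] : Matrix (Fin (2 * g)) (Fin (2 * g)) R :=
  fun i j =>
    if (i : ℕ) < (j : ℕ) ∧ (i : ℕ) + (j : ℕ) = 2 * g - 1 then 1
    else if (j : ℕ) < (i : ℕ) ∧ (i : ℕ) + (j : ℕ) = 2 * g - 1 then -1
    else 0

/-- The standard symplectic (bilinear antisymmetric) form on `R^{2g}`. -/
def symp (g : ℕ) (R : Type*) [CommRing R] (x y : Fin (2 * g) → R) : R :=
  ∑ i, ∑ j, x i * sympJ g R i j * y j

variable {g : ℕ} {R : Type*} [CommRing R]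

lemma symp_eq_dot (x y : Fin (2*g) → R) : symp g R x y = x ⬝ᵥ (sympJ g R *ᵥ y) := by
  simp [symp, dotProduct, mulVec, Finset.mul_sum, mul_assoc]

lemma sympJ_antisymm (i j : Fin (2*g)) : sympJ g R j i = - sympJ g R i j := by
  unfold sympJ
  rcases lt_trichotomy (i:ℕ) (j:ℕ) with h | h | h <;>
    split_ifs <;> simp_all <;> omega

lemma symp_self (x : Fin (2*g) → R) : symp g R x x = 0 := by
  unfold symp
  rw [← Finset.sum_product']
  apply Finset.sum_ninvolution (fun p => (p.2, p.1))
  · intro ⟨i, j⟩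
    simp only
    rw [sympJ_antisymm]
    ring
  · rintro ⟨i, j⟩ h heq
    apply h
    have h1 : j = i := congrArg Prod.fst heq
    subst h1
    have : sympJ g R j j = 0 := by unfold sympJ; simp
    simp [this]
  · intro a; simp
  · intro a; simp

lemma sympJ_transpose : (sympJ g R)ᵀ = - sympJ g R := by
  ext i j; rw [Matrix.transpose_apply, sympJ_antisymm]; rfl

lemma symp_antisymm (x y : Fin (2*g) → R) : symp g R y x = - symp g R x y := by
  rw [symp_eq_dot, symp_eq_dot, Matrix.dotProduct_mulVec, ← Matrix.mulVec_transpose,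
    sympJ_transpose, Matrix.neg_mulVec, neg_dotProduct, dotProduct_comm]

lemma symp_add_left (x x' y : Fin (2*g) → R) :
    symp g R (x + x') y = symp g R x y + symp g R x' y := by
  simp [symp_eq_dot, add_dotProduct]

lemma symp_add_right (x y y' : Fin (2*g) → R) :
    symp g R x (y + y') = symp g R x y + symp g R x y' := by
  simp [symp_eq_dot, Matrix.mulVec_add, dotProduct_add]

lemma symp_smul_left (c : R) (x y : Fin (2*g) → R) :
    symp g R (c • x) y = c * symp g R x y := by
  simp [symp_eq_dot, smul_dotProduct]

lemma symp_smul_right (c : R) (x y : Fin (2*g) → R) :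
    symp g R x (c • y) = c * symp g R x y := by
  simp [symp_eq_dot, Matrix.mulVec_smul, dotProduct_smul]

lemma symp_neg_right (x y : Fin (2*g) → R) :
    symp g R x (-y) = - symp g R x y := by
  simp [symp_eq_dot, Matrix.mulVec_neg]

lemma symp_sub_right (x y y' : Fin (2*g) → R) :
    symp g R x (y - y') = symp g R x y - symp g R x y' := by
  rw [sub_eq_add_neg, symp_add_right, symp_neg_right, sub_eq_add_neg]

/-- The index pairing `i ↦ 2g-1-i`. -/
def sig {g : ℕ} (i : Fin (2*g)) : Fin (2*g) := ⟨2*g - 1 - (i:ℕ), by omega⟩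

lemma sig_sig {g : ℕ} (i : Fin (2*g)) : sig (sig i) = i := by
  have := i.isLt; ext; simp [sig]; omega

/-- The sign `ε_i`. -/
def eps (g : ℕ) (R : Type*) [Ring R] (i : Fin (2*g)) : R := if (i:ℕ) < g then 1 else -1

lemma eps_mul_self (i : Fin (2*g)) : eps g R i * eps g R i = 1 := by
  unfold eps; split_ifs <;> ring

lemma eps_ne_zero [Nontrivial R] (i : Fin (2*g)) : eps g R i ≠ 0 := by
  unfold eps; split_ifs
  · exact one_ne_zero
  · exact neg_ne_zero.mpr one_ne_zero

lemma sympJ_sig_self (i : Fin (2*g)) : sympJ g R (sig i) i = - eps g R i := by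
  have := i.isLt
  unfold sympJ eps sig
  split_ifs <;> simp_all <;> omega

lemma sympJ_self_sig (i : Fin (2*g)) : sympJ g R i (sig i) = eps g R i := by
  have := i.isLt
  unfold sympJ eps sig
  split_ifs <;> simp_all <;> omega

lemma sympJ_eq_zero {i j : Fin (2*g)} (h : j ≠ sig i) : sympJ g R j i = 0 := by
  have hi := i.isLt
  have : ¬ ((j:ℕ) + (i:ℕ) = 2*g - 1) := by
    intro hc
    apply h
    ext
    simp [sig]; omega
  unfold sympJ
  split_ifs with h1 h2
  · exact absurd h1.2 this
  · exact absurd h2.2 this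
  · rfl

lemma symp_single_right (x : Fin (2*g) → R) (i : Fin (2*g)) :
    symp g R x (Pi.single i 1) = - eps g R i * x (sig i) := by
  rw [symp_eq_dot]
  unfold dotProduct
  rw [Finset.sum_eq_single (sig i)]
  · simp only [Matrix.mulVec_single, MulOpposite.op_one, one_smul, Matrix.col_apply, sympJ_sig_self, mul_one]; ring
  · intro j _ hj
    simp only [Matrix.mulVec_single, MulOpposite.op_one, one_smul, Matrix.col_apply, sympJ_eq_zero hj, mul_one, mul_zero]
  · intro h; exact absurd (Finset.mem_univ _) h

lemma symp_single_left (x : Fin (2*g) → R) (i : Fin (2*g)) :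
    symp g R (Pi.single i 1) x = eps g R i * x (sig i) := by
  rw [symp_antisymm, symp_single_right]; ring

lemma coord_eq_symp (x : Fin (2*g) → R) (j : Fin (2*g)) :
    x j = - eps g R (sig j) * symp g R x (Pi.single (sig j) 1) := by
  rw [symp_single_right, sig_sig]
  have h := eps_mul_self (R := R) (sig j)
  linear_combination (-(x j)) * h

/-- The symplectic transvection `x ↦ x + λ ⟨x,v⟩ v` as a matrix. -/
def Tmat (g : ℕ) (R : Type*) [CommRing R] (v : Fin (2*g) → R) (l : R) :
    Matrix (Fin (2*g)) (Fin (2*g)) R :=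
  1 + l • Matrix.vecMulVec v (sympJ g R *ᵥ v)

lemma Tmat_mulVec (v : Fin (2*g) → R) (l : R) (x : Fin (2*g) → R) :
    Tmat g R v l *ᵥ x = x + (l * symp g R x v) • v := by
  have hv : Matrix.vecMulVec v (sympJ g R *ᵥ v) *ᵥ x = (symp g R x v) • v := by
    ext i
    simp only [Matrix.mulVec, dotProduct, Matrix.vecMulVec_apply, Pi.smul_apply,
      symp_eq_dot, smul_eq_mul]
    rw [Finset.sum_mul]
    apply Finset.sum_congr rfl
    intro j _
    ring
  rw [Tmat, Matrix.add_mulVec, Matrix.one_mulVec, Matrix.smul_mulVec, hv, smul_smul]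

lemma Tmat_preserves (v : Fin (2*g) → R) (l : R) (x y : Fin (2*g) → R) :
    symp g R (Tmat g R v l *ᵥ x) (Tmat g R v l *ᵥ y) = symp g R x y := by
  rw [Tmat_mulVec, Tmat_mulVec, symp_add_left, symp_add_right, symp_add_right,
    symp_smul_left, symp_smul_right, symp_smul_left, symp_smul_right]
  rw [symp_self v, symp_antisymm y v]
  ring

lemma Tmat_fix (v : Fin (2*g) → R) (l : R) (z : Fin (2*g) → R) (h : symp g R z v = 0) :
    Tmat g R v l *ᵥ z = z := by
  rw [Tmat_mulVec, h, mul_zero, zero_smul, add_zero]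

lemma Tmat_move {F : Type*} [Field F] {u v : Fin (2*g) → F} (h : symp g F u v ≠ 0) :
    Tmat g F (v - u) (symp g F u v)⁻¹ *ᵥ u = v := by
  rw [Tmat_mulVec, symp_sub_right, symp_self, sub_zero, inv_mul_cancel₀ h, one_smul]
  abel

/-- Product of a list of transvections. -/
def TransProd (g : ℕ) (R : Type*) [CommRing R] (l : List ((Fin (2*g) → R) × R)) :
    Matrix (Fin (2*g)) (Fin (2*g)) R :=
  (l.map fun p => Tmat g R p.1 p.2).prod

lemma TransProd_nil : TransProd g R [] = 1 := rfl

lemma TransProd_cons (p : (Fin (2*g) → R) × R) (t : List ((Fin (2*g) → R) × R)) :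
    TransProd g R (p :: t) = Tmat g R p.1 p.2 * TransProd g R t := by
  simp [TransProd]

lemma TransProd_append (a b : List ((Fin (2*g) → R) × R)) :
    TransProd g R (a ++ b) = TransProd g R a * TransProd g R b := by
  simp [TransProd]

lemma TransProd_preserves (l : List ((Fin (2*g) → R) × R)) (x y : Fin (2*g) → R) :
    symp g R (TransProd g R l *ᵥ x) (TransProd g R l *ᵥ y) = symp g R x y := by
  induction l generalizing x y with
  | nil => rw [TransProd_nil, Matrix.one_mulVec, Matrix.one_mulVec]
  | cons p t ih =>
    rw [TransProd_cons, ← Matrix.mulVec_mulVec, ← Matrix.mulVec_mulVec,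
      Tmat_preserves, ih]

lemma TransProd_fix (l : List ((Fin (2*g) → R) × R)) (z : Fin (2*g) → R)
    (h : ∀ p ∈ l, symp g R z p.1 = 0) : TransProd g R l *ᵥ z = z := by
  induction l with
  | nil => rw [TransProd_nil, Matrix.one_mulVec]
  | cons p t ih =>
    rw [TransProd_cons, ← Matrix.mulVec_mulVec, ih (fun q hq => h q (List.mem_cons_of_mem _ hq)),
      Tmat_fix _ _ _ (h p List.mem_cons_self)]

lemma ext_of_mulVec (A B : Matrix (Fin (2*g)) (Fin (2*g)) R)
    (h : ∀ x, A *ᵥ x = B *ᵥ x) : A = B := by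
  ext i j
  have := congrFun (h (Pi.single j 1)) i
  simpa using this

lemma Tmat_mul_inv (v : Fin (2*g) → R) (l : R) : Tmat g R v l * Tmat g R v (-l) = 1 := by
  apply ext_of_mulVec
  intro x
  rw [← Matrix.mulVec_mulVec, Tmat_mulVec, Tmat_mulVec, Matrix.one_mulVec,
    symp_add_left, symp_smul_left, symp_self, mul_zero, add_zero]
  ext i
  simp

/-- Formal inverse list. -/
def invList (g : ℕ) (R : Type*) [CommRing R] (l : List ((Fin (2*g) → R) × R)) :
    List ((Fin (2*g) → R) × R) :=
  (l.map fun p => (p.1, -p.2)).reverse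

lemma TransProd_invList (l : List ((Fin (2*g) → R) × R)) :
    TransProd g R (invList g R l) * TransProd g R l = 1 := by
  induction l with
  | nil => simp [invList, TransProd_nil]
  | cons p t ih =>
    have : invList g R (p :: t) = invList g R t ++ [(p.1, -p.2)] := by
      simp [invList]
    rw [this, TransProd_append, TransProd_cons, TransProd_nil, mul_one,
      TransProd_cons, mul_assoc, ← mul_assoc (Tmat g R p.1 (-p.2)),
      show Tmat g R p.1 (-p.2) * Tmat g R p.1 p.2 = 1 by
        have := Tmat_mul_inv (g := g) (R := R) p.1 (-p.2); rwa [neg_neg] at this,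
      one_mul, ih]

lemma TransProd_singleton (p : (Fin (2*g) → R) × R) :
    TransProd g R [p] = Tmat g R p.1 p.2 := by
  simp [TransProd]

/-- Supported on middle coordinates `[k, 2g-k)`. -/
def Mid (g k : ℕ) {R : Type*} [CommRing R] (v : Fin (2*g) → R) : Prop :=
  ∀ i : Fin (2*g), (i:ℕ) < k ∨ 2*g - k ≤ (i:ℕ) → v i = 0

lemma Mid.add {k : ℕ} {u v : Fin (2*g) → R} (hu : Mid g k u) (hv : Mid g k v) :
    Mid g k (u + v) := fun i hi => by simp [hu i hi, hv i hi]

lemma Mid.sub {k : ℕ} {u v : Fin (2*g) → R} (hu : Mid g k u) (hv : Mid g k v) :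
    Mid g k (u - v) := fun i hi => by simp [hu i hi, hv i hi]

lemma Mid.smul {k : ℕ} {v : Fin (2*g) → R} (c : R) (hv : Mid g k v) :
    Mid g k (c • v) := fun i hi => by simp [hv i hi]

lemma Mid.single {k : ℕ} {i : Fin (2*g)} (h1 : k ≤ (i:ℕ)) (h2 : (i:ℕ) < 2*g - k) :
    Mid g k (Pi.single i (1:R)) := by
  intro j hj
  have : j ≠ i := by intro h; subst h; omega
  simp [Pi.single_eq_of_ne this]

lemma sig_mem_mid {k : ℕ} {i : Fin (2*g)} (h1 : k ≤ (i:ℕ)) (h2 : (i:ℕ) < 2*g - k)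
    (hk : k ≤ g) : k ≤ (sig i : ℕ) ∧ (sig i : ℕ) < 2*g - k := by
  have := i.isLt
  simp only [sig]
  omega

lemma sig_notmem_mid {k : ℕ} {i : Fin (2*g)} (h : (i:ℕ) < k ∨ 2*g - k ≤ (i:ℕ))
    (hk : k ≤ g) : ((sig i : Fin (2*g)) : ℕ) < k ∨ 2*g - k ≤ ((sig i : Fin (2*g)) : ℕ) := by
  have := i.isLt
  simp only [sig]
  omega

lemma symp_single_left_mid {k : ℕ} {v : Fin (2*g) → R} (hv : Mid g k v) {i : Fin (2*g)}
    (hi : (i:ℕ) < k ∨ 2*g - k ≤ (i:ℕ)) (hk : k ≤ g) :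
    symp g R (Pi.single i 1) v = 0 := by
  rw [symp_single_left, hv _ (sig_notmem_mid hi hk), mul_zero]

lemma Mid.tmat {k : ℕ} {v x : Fin (2*g) → R} (hv : Mid g k v) (hx : Mid g k x) (l : R) :
    Mid g k (Tmat g R v l *ᵥ x) := by
  rw [Tmat_mulVec]
  exact hx.add (hv.smul _)

lemma Mid.transProd {k : ℕ} {l : List ((Fin (2*g) → R) × R)}
    (hl : ∀ p ∈ l, Mid g k p.1) {x : Fin (2*g) → R} (hx : Mid g k x) :
    Mid g k (TransProd g R l *ᵥ x) := by
  induction l with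
  | nil => rwa [TransProd_nil, Matrix.one_mulVec]
  | cons p t ih =>
    rw [TransProd_cons, ← Matrix.mulVec_mulVec]
    exact (hl p List.mem_cons_self).tmat (ih fun q hq => hl q (List.mem_cons_of_mem _ hq)) p.2

lemma TransProd_fix_single {k : ℕ} {l : List ((Fin (2*g) → R) × R)}
    (hl : ∀ p ∈ l, Mid g k p.1) {i : Fin (2*g)} (hi : (i:ℕ) < k ∨ 2*g - k ≤ (i:ℕ))
    (hk : k ≤ g) : TransProd g R l *ᵥ Pi.single i 1 = Pi.single i 1 :=
  TransProd_fix _ _ fun p hp => symp_single_left_mid (hl p hp) hi hk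

section FieldPart

variable {F : Type*} [Field F]

lemma exists_symp_ne_zero {k : ℕ} (hk : k ≤ g) {u : Fin (2*g) → F} (hu : Mid g k u)
    (hu0 : u ≠ 0) : ∃ z, Mid g k z ∧ symp g F u z ≠ 0 := by
  obtain ⟨i, hi⟩ : ∃ i, u i ≠ 0 := by
    by_contra h
    push_neg at h
    exact hu0 (funext h)
  have hmem : k ≤ (i:ℕ) ∧ (i:ℕ) < 2*g - k := by
    by_contra h
    exact hi (hu i (by omega))
  refine ⟨Pi.single (sig i) 1, Mid.single (sig_mem_mid hmem.1 hmem.2 hk).1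
    (sig_mem_mid hmem.1 hmem.2 hk).2, ?_⟩
  rw [symp_single_right, sig_sig]
  exact mul_ne_zero (neg_ne_zero.mpr (eps_ne_zero _)) hi

/-- Sub-lemma A: transvections supported on the middle block act transitively on
nonzero middle vectors. -/
lemma moveA {k : ℕ} (hk : k ≤ g) {u v : Fin (2*g) → F} (hu : Mid g k u) (hv : Mid g k v)
    (hu0 : u ≠ 0) (hv0 : v ≠ 0) :
    ∃ l, (∀ p ∈ l, Mid g k p.1) ∧ TransProd g F l *ᵥ u = v := by
  by_cases huv : u = v
  · exact ⟨[], by simp, by rw [TransProd_nil, Matrix.one_mulVec, huv]⟩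
  by_cases hs : symp g F u v ≠ 0
  · refine ⟨[(v - u, (symp g F u v)⁻¹)], ?_, ?_⟩
    · rintro p hp
      simp only [List.mem_singleton] at hp
      subst hp
      exact hv.sub hu
    · rw [TransProd_singleton]
      exact Tmat_move hs
  push_neg at hs
  obtain ⟨a, ha, hua⟩ := exists_symp_ne_zero hk hu hu0
  obtain ⟨b, hb, hvb⟩ := exists_symp_ne_zero hk hv hv0
  -- choose z with symp u z ≠ 0 and symp v z ≠ 0
  obtain ⟨z, hz, huz, hvz⟩ : ∃ z, Mid g k z ∧ symp g F u z ≠ 0 ∧ symp g F v z ≠ 0 := by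
    by_cases hva : symp g F v a ≠ 0
    · exact ⟨a, ha, hua, hva⟩
    by_cases hub : symp g F u b ≠ 0
    · exact ⟨b, hb, hub, hvb⟩
    push_neg at hva hub
    refine ⟨a + b, ha.add hb, ?_, ?_⟩
    · rwa [symp_add_right, hub, add_zero]
    · rwa [symp_add_right, hva, zero_add]
  have hzv : symp g F z v ≠ 0 := fun h => hvz (by rw [symp_antisymm z v, h, neg_zero])
  refine ⟨[(v - z, (symp g F z v)⁻¹), (z - u, (symp g F u z)⁻¹)], ?_, ?_⟩
  · intro p hp
    rcases List.mem_cons.mp hp with rfl | hp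
    · exact hv.sub hz
    · rcases List.mem_singleton.mp hp with rfl
      exact hz.sub hu
  · rw [show [(v - z, (symp g F z v)⁻¹), (z - u, (symp g F u z)⁻¹)] =
      [(v - z, (symp g F z v)⁻¹)] ++ [(z - u, (symp g F u z)⁻¹)] from rfl,
      TransProd_append, ← Matrix.mulVec_mulVec, TransProd_singleton, TransProd_singleton,
      Tmat_move huz, Tmat_move hzv]

end FieldPart

section FieldPart2

variable {F : Type*} [Field F]

/-- Sub-lemma B: transvections fixing `v` move `u''` to `v'` when both pair with `v` to `1`. -/
lemma moveB {k : ℕ} {v u'' v' : Fin (2*g) → F} (hv : Mid g k v) (hu : Mid g k u'')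
    (hv' : Mid g k v') (h1 : symp g F v u'' = 1) (h2 : symp g F v v' = 1) :
    ∃ l, (∀ p ∈ l, Mid g k p.1 ∧ symp g F v p.1 = 0) ∧ TransProd g F l *ᵥ u'' = v' := by
  by_cases heq : u'' = v'
  · exact ⟨[], by simp, by rw [TransProd_nil, Matrix.one_mulVec, heq]⟩
  by_cases hs : symp g F u'' v' ≠ 0
  · refine ⟨[(v' - u'', (symp g F u'' v')⁻¹)], ?_, ?_⟩
    · intro p hp
      rcases List.mem_singleton.mp hp with rfl
      exact ⟨hv'.sub hu, by rw [symp_sub_right, h1, h2, sub_self]⟩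
    · rw [TransProd_singleton]
      exact Tmat_move hs
  push_neg at hs
  have hz1 : symp g F (u'' + v) v' ≠ 0 := by
    rw [symp_add_left, hs, zero_add, h2]
    exact one_ne_zero
  refine ⟨[(v' - (u'' + v), (symp g F (u'' + v) v')⁻¹), (v, -1)], ?_, ?_⟩
  · intro p hp
    rcases List.mem_cons.mp hp with rfl | hp
    · refine ⟨hv'.sub (hu.add hv), ?_⟩
      rw [symp_sub_right, symp_add_right, h1, h2, symp_self, add_zero, sub_self]
    · rcases List.mem_singleton.mp hp with rfl
      exact ⟨hv, symp_self v⟩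
  · rw [show [(v' - (u'' + v), (symp g F (u'' + v) v')⁻¹), ((v : Fin (2*g) → F), (-1 : F))] =
      [(v' - (u'' + v), (symp g F (u'' + v) v')⁻¹)] ++ [(v, -1)] from rfl,
      TransProd_append, ← Matrix.mulVec_mulVec, TransProd_singleton, TransProd_singleton]
    have hstep : Tmat g F v (-1) *ᵥ u'' = u'' + v := by
      rw [Tmat_mulVec]
      have : symp g F u'' v = -1 := by rw [symp_antisymm v u'', h1]
      rw [this]
      norm_num
    rw [hstep, Tmat_move hz1]

end FieldPart2

lemma symp_zero_left (y : Fin (2*g) → R) : symp g R 0 y = 0 := by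
  simp [symp_eq_dot]

lemma Mid.mulVecM {k : ℕ} (hk : k ≤ g) {M : Matrix (Fin (2*g)) (Fin (2*g)) R}
    (hM : ∀ x y, symp g R (M *ᵥ x) (M *ᵥ y) = symp g R x y)
    (hfix : ∀ i : Fin (2*g), (i:ℕ) < k ∨ 2*g - k ≤ (i:ℕ) → M *ᵥ Pi.single i 1 = Pi.single i 1)
    {x : Fin (2*g) → R} (hx : Mid g k x) : Mid g k (M *ᵥ x) := by
  intro j hj
  rw [coord_eq_symp (M *ᵥ x) j]
  have hsj := sig_notmem_mid hj hk
  rw [← hfix (sig j) hsj, hM, symp_single_right, sig_sig, hx j hj]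
  ring

section Gen

variable {F : Type*} [Field F]

lemma symp_single_pair (hg : 0 < g) {k : ℕ} (hk : k < g) :
    symp g F (Pi.single (⟨k, by omega⟩ : Fin (2*g)) 1)
      (Pi.single (⟨2*g-1-k, by omega⟩ : Fin (2*g)) 1) = 1 := by
  rw [symp_single_left]
  have hsig : sig (⟨k, by omega⟩ : Fin (2*g)) = ⟨2*g-1-k, by omega⟩ := by
    ext; simp [sig]
  rw [hsig, Pi.single_eq_same]
  have : eps g F (⟨k, by omega⟩ : Fin (2*g)) = 1 := by
    unfold eps; simp [hk]
  rw [this, mul_one]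

lemma gen_aux (hg : 0 < g) : ∀ d k, k + d = g →
    ∀ M : Matrix (Fin (2*g)) (Fin (2*g)) F,
    (∀ x y, symp g F (M *ᵥ x) (M *ᵥ y) = symp g F x y) →
    (∀ i : Fin (2*g), (i:ℕ) < k ∨ 2*g - k ≤ (i:ℕ) → M *ᵥ Pi.single i 1 = Pi.single i 1) →
    ∃ l, TransProd g F l * M = 1 := by
  intro d
  induction d with
  | zero =>
    intro k hk M hM hfix
    have hM1 : M = 1 := by
      ext i j
      have h := congrFun (hfix j (by omega)) i
      simp only [Matrix.mulVec_single, MulOpposite.op_one, one_smul, Matrix.col_apply, mul_one] at h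
      rw [h, Pi.single_apply, Matrix.one_apply]
    exact ⟨[], by rw [TransProd_nil, one_mul, hM1]⟩
  | succ d ih =>
    intro k hk M hM hfix
    have hkg : k < g := by omega
    set ik : Fin (2*g) := ⟨k, by omega⟩ with hik
    set jk : Fin (2*g) := ⟨2*g-1-k, by omega⟩ with hjk
    set u : Fin (2*g) → F := M *ᵥ Pi.single ik 1 with hu
    set u' : Fin (2*g) → F := M *ᵥ Pi.single jk 1 with hu'
    have heik_mid : Mid g k (Pi.single ik (1:F)) := Mid.single (by simp [hik]) (by simp [hik]; omega)
    have hejk_mid : Mid g k (Pi.single jk (1:F)) := Mid.single (by simp [hjk]; omega) (by simp [hjk]; omega)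
    have hu_mid : Mid g k u := Mid.mulVecM hkg.le hM hfix heik_mid
    have hu'_mid : Mid g k u' := Mid.mulVecM hkg.le hM hfix hejk_mid
    have hpair : symp g F u u' = 1 := by
      rw [hu, hu', hM]
      exact symp_single_pair hg hkg
    have hu0 : u ≠ 0 := by
      intro h
      rw [h, symp_zero_left] at hpair
      exact zero_ne_one hpair
    have heik0 : (Pi.single ik 1 : Fin (2*g) → F) ≠ 0 := by
      intro h
      have := congrFun h ik
      simp at this
    obtain ⟨lA, hlA, hAu⟩ := moveA hkg.le hu_mid heik_mid hu0 heik0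
    set u'' : Fin (2*g) → F := TransProd g F lA *ᵥ u' with hu''
    have hu''_mid : Mid g k u'' := Mid.transProd hlA hu'_mid
    have h2 : symp g F (Pi.single ik 1) u'' = 1 := by
      rw [← hAu, hu'']
      rw [TransProd_preserves]
      exact hpair
    have h3 : symp g F (Pi.single ik (1:F)) (Pi.single jk 1) = 1 := symp_single_pair hg hkg
    obtain ⟨lB, hlB, hBu⟩ := moveB heik_mid hu''_mid hejk_mid h2 h3
    have hlBmid : ∀ p ∈ lB, Mid g k p.1 := fun p hp => (hlB p hp).1
    have hBfix : TransProd g F lB *ᵥ Pi.single ik 1 = Pi.single ik 1 :=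
      TransProd_fix _ _ fun p hp => (hlB p hp).2
    set M' := TransProd g F (lB ++ lA) * M with hM'def
    have hM'vec : ∀ x, M' *ᵥ x = TransProd g F lB *ᵥ (TransProd g F lA *ᵥ (M *ᵥ x)) := by
      intro x
      rw [hM'def, ← Matrix.mulVec_mulVec, TransProd_append, ← Matrix.mulVec_mulVec]
    have hM' : ∀ x y, symp g F (M' *ᵥ x) (M' *ᵥ y) = symp g F x y := by
      intro x y
      rw [hM'vec, hM'vec, TransProd_preserves, TransProd_preserves, hM]
    have hmidall : ∀ p ∈ lB ++ lA, Mid g k p.1 := by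
      intro p hp
      rcases List.mem_append.mp hp with hp | hp
      · exact hlBmid p hp
      · exact hlA p hp
    have hfix' : ∀ i : Fin (2*g), (i:ℕ) < k+1 ∨ 2*g - (k+1) ≤ (i:ℕ) →
        M' *ᵥ Pi.single i 1 = Pi.single i 1 := by
      intro i hi
      by_cases hold : (i:ℕ) < k ∨ 2*g - k ≤ (i:ℕ)
      · rw [hM'vec, hfix i hold, Matrix.mulVec_mulVec, ← TransProd_append,
          TransProd_fix_single hmidall hold hkg.le]
      · push_neg at hold
        have : (i:ℕ) = k ∨ (i:ℕ) = 2*g-1-k := by omega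
        rcases this with h | h
        · have : i = ik := by ext; simp [hik, h]
          subst this
          rw [hM'vec, ← hu, hAu, hBfix]
        · have : i = jk := by ext; simp [hjk, h]
          subst this
          rw [hM'vec, ← hu', ← hu'', hBu]
    obtain ⟨l₁, hl₁⟩ := ih (k+1) (by omega) M' hM' hfix'
    refine ⟨l₁ ++ (lB ++ lA), ?_⟩
    rw [TransProd_append, mul_assoc, ← hM'def, hl₁]

end Gen

section Lift

variable {p : ℕ}

lemma sympJ_cast (i j : Fin (2*g)) :
    ((sympJ g ℤ i j : ℤ) : ZMod p) = sympJ g (ZMod p) i j := by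
  unfold sympJ
  split_ifs <;> simp

lemma Tmat_map (v : Fin (2*g) → ℤ) (c : ℤ) :
    (Tmat g ℤ v c).map (Int.cast : ℤ → ZMod p)
      = Tmat g (ZMod p) (fun i => ((v i : ℤ) : ZMod p)) ((c : ℤ) : ZMod p) := by
  ext i j
  simp only [Matrix.map_apply, Tmat, Matrix.add_apply, Matrix.one_apply, Matrix.smul_apply,
    Matrix.vecMulVec_apply, Matrix.mulVec, dotProduct, smul_eq_mul]
  push_cast [sympJ_cast]
  split_ifs <;> simp

lemma TransProd_map (l' : List ((Fin (2*g) → ℤ) × ℤ)) :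
    (TransProd g ℤ l').map (Int.cast : ℤ → ZMod p)
      = TransProd g (ZMod p)
          (l'.map fun q => ((fun i => ((q.1 i : ℤ) : ZMod p)), ((q.2 : ℤ) : ZMod p))) := by
  have hmap : ∀ A : Matrix (Fin (2*g)) (Fin (2*g)) ℤ,
      A.map (Int.cast : ℤ → ZMod p) = (Int.castRingHom (ZMod p)).mapMatrix A := fun A => rfl
  induction l' with
  | nil =>
    rw [TransProd_nil, hmap, _root_.map_one, List.map_nil, TransProd_nil]
  | cons q t ih =>
    rw [TransProd_cons, hmap, _root_.map_mul, ← hmap, ← hmap, ih, List.map_cons, TransProd_cons,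
      Tmat_map]

end Lift


/-- reduction mod `p` maps the integral symplectic group onto the
symplectic group over `ℤ/pℤ`. -/
theorem symplectic_mod_p_lifts (p : ℕ) (hp : p.Prime) (g : ℕ) (hg : 0 < g)
    (M : Matrix (Fin (2 * g)) (Fin (2 * g)) (ZMod p))
    (hM : ∀ x y, symp g (ZMod p) (M.mulVec x) (M.mulVec y) = symp g (ZMod p) x y) :
    ∃ N : Matrix (Fin (2 * g)) (Fin (2 * g)) ℤ,
      (∀ x y, symp g ℤ (N.mulVec x) (N.mulVec y) = symp g ℤ x y) ∧
      N.map (Int.cast : ℤ → ZMod p) = M := by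
  haveI : Fact p.Prime := ⟨hp⟩
  obtain ⟨l, hl⟩ := gen_aux (F := ZMod p) hg g 0 (Nat.zero_add g) M hM
    (fun i hi => by
      exfalso
      have := i.isLt
      omega)
  have hMeq : M = TransProd g (ZMod p) (invList g (ZMod p) l) := by
    have hinv := TransProd_invList (g := g) (R := ZMod p) l
    calc M = 1 * M := (one_mul M).symm
    _ = (TransProd g (ZMod p) (invList g (ZMod p) l) * TransProd g (ZMod p) l) * M := by
        rw [hinv]
    _ = TransProd g (ZMod p) (invList g (ZMod p) l) * (TransProd g (ZMod p) l * M) :=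
        mul_assoc _ _ _
    _ = TransProd g (ZMod p) (invList g (ZMod p) l) := by rw [hl, mul_one]
  set l' : List ((Fin (2*g) → ℤ) × ℤ) :=
    (invList g (ZMod p) l).map
      (fun q => ((fun i => (ZMod.cast (q.1 i) : ℤ)), (ZMod.cast q.2 : ℤ))) with hl'def
  refine ⟨TransProd g ℤ l', TransProd_preserves l', ?_⟩
  rw [TransProd_map, hMeq, hl'def, List.map_map]
  refine congrArg (TransProd g (ZMod p)) ?_
  conv_rhs => rw [← List.map_id (invList g (ZMod p) l)]
  apply List.map_congr_left
  intro q _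
  simp only [Function.comp_apply, id_eq]
  ext
  · simp [ZMod.intCast_zmod_cast]
  · simp [ZMod.intCast_zmod_cast]
end

section
/- Let p be a prime and g a positive integer, and let W be a 2-dimensional linear subspace of (Z/pZ)^{2g} on which the standard symplectic form (.,.)_p is not identically zero (there exist x, y ∈ W with (x, y)_p ≠ 0). Then there exist primitive vectors a_1, a_2 ∈ Z^{2g} with (a_1, a_2) = 1 for the standard symplectic form on Z^{2g}, such that the reductions of a_1 and a_2 modulo p both lie in W. -/
open Finset

/-- the involution i ↦ 2g-1-i -/
def sg {g : ℕ} (i : Fin (2 * g)) : Fin (2 * g) :=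
  ⟨2 * g - 1 - i.val, by have := i.isLt; omega⟩

lemma sg_sg {g : ℕ} (i : Fin (2 * g)) : sg (sg i) = i := by
  have := i.isLt; simp only [sg]; ext; simp; omega

lemma sg_add {g : ℕ} (i : Fin (2 * g)) : (sg i : ℕ) + (i : ℕ) = 2 * g - 1 := by
  have := i.isLt; simp only [sg]; omega

lemma sg_ne {g : ℕ} (i : Fin (2 * g)) : sg i ≠ i := by
  have := i.isLt
  intro h
  have h2 : (sg i : ℕ) = i := by rw [h]
  simp only [sg] at h2
  omega

lemma sympJ_sq {g : ℕ} (i : Fin (2 * g)) :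
    sympJ g ℤ i (sg i) * sympJ g ℤ i (sg i) = 1 := by
  have h1 := sg_add i
  have h2 := sg_ne i
  have h3 : (i : ℕ) ≠ (sg i : ℕ) := fun h => h2 (Fin.ext h.symm)
  have hs : (i:ℕ) + (sg i : ℕ) = 2*g-1 := by omega
  rcases lt_or_gt_of_ne h3 with h | h
  · simp [sympJ, h, hs, not_lt_of_gt h]
  · simp [sympJ, h, hs, not_lt_of_gt h]

lemma symp_single {g : ℕ} (x : Fin (2 * g) → ℤ) (k : Fin (2 * g)) (c : ℤ) :
    symp g ℤ x (Pi.single k c) = x (sg k) * sympJ g ℤ (sg k) k * c := by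
  unfold symp
  have hinner : ∀ i : Fin (2*g), ∑ j, x i * sympJ g ℤ i j * (Pi.single k c : Fin (2*g) → ℤ) j
      = x i * sympJ g ℤ i k * c := by
    intro i
    rw [Finset.sum_eq_single k]
    · simp
    · intro j _ hj; rw [Pi.single_eq_of_ne hj]; ring
    · simp
  simp only [hinner]
  rw [Finset.sum_eq_single (sg k)]
  · intro i _ hi
    have : sympJ g ℤ i k = 0 := by
      have hik : (i : ℕ) + (k : ℕ) ≠ 2 * g - 1 := by
        intro h
        apply hi
        ext
        have := i.isLt; have := k.isLt
        simp only [sg]; omega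
      simp [sympJ, hik]
    rw [this]; ring
  · simp

lemma symp_sub_mul {g : ℕ} {R : Type*} [CommRing R] (x y w : Fin (2 * g) → R) (c : R) :
    symp g R x (fun k => y k - c * w k) = symp g R x y - c * symp g R x w := by
  unfold symp
  rw [Finset.mul_sum, ← Finset.sum_sub_distrib]
  refine Finset.sum_congr rfl fun i _ => ?_
  rw [Finset.mul_sum, ← Finset.sum_sub_distrib]
  refine Finset.sum_congr rfl fun j _ => ?_
  ring

lemma symp_add {g : ℕ} {R : Type*} [CommRing R] (x y w : Fin (2 * g) → R) :
    symp g R x (y + w) = symp g R x y + symp g R x w := by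
  unfold symp
  rw [← Finset.sum_add_distrib]
  refine Finset.sum_congr rfl fun i _ => ?_
  rw [← Finset.sum_add_distrib]
  refine Finset.sum_congr rfl fun j _ => ?_
  simp [Pi.add_apply]; ring

lemma symp_smul {g : ℕ} {R : Type*} [CommRing R] (x y : Fin (2 * g) → R) (r : R) :
    symp g R x (r • y) = r * symp g R x y := by
  unfold symp
  rw [Finset.mul_sum]
  refine Finset.sum_congr rfl fun i _ => ?_
  rw [Finset.mul_sum]
  refine Finset.sum_congr rfl fun j _ => ?_
  simp [Pi.smul_apply, smul_eq_mul]; ring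

lemma symp_cast {g p : ℕ} (a b : Fin (2 * g) → ℤ) :
    ((symp g ℤ a b : ℤ) : ZMod p)
      = symp g (ZMod p) (fun i => ((a i : ℤ) : ZMod p)) (fun i => ((b i : ℤ) : ZMod p)) := by
  unfold symp
  push_cast
  refine Finset.sum_congr rfl fun i _ => ?_
  refine Finset.sum_congr rfl fun j _ => ?_
  have : ((sympJ g ℤ i j : ℤ) : ZMod p) = sympJ g (ZMod p) i j := by
    simp [sympJ, apply_ite (fun z : ℤ => (z : ZMod p))]
  rw [← this]

/-- a `2`-dimensional subspace of `(ℤ/pℤ)^{2g}` on which the standard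
symplectic form is not identically zero contains the reductions of two primitive
integral vectors pairing to `1`. -/
theorem hyperbolic_pair_lifts (p : ℕ) (hp : p.Prime) (g : ℕ) (hg : 0 < g)
    (W : Submodule (ZMod p) (Fin (2 * g) → ZMod p))
    (hW : Module.finrank (ZMod p) W = 2)
    (hnt : ∃ x ∈ W, ∃ y ∈ W, symp g (ZMod p) x y ≠ 0) :
    ∃ a₁ a₂ : Fin (2 * g) → ℤ,
      Finset.univ.gcd a₁ = 1 ∧ Finset.univ.gcd a₂ = 1 ∧
      symp g ℤ a₁ a₂ = 1 ∧
      (fun i => ((a₁ i : ℤ) : ZMod p)) ∈ W ∧ (fun i => ((a₂ i : ℤ) : ZMod p)) ∈ W := by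
  haveI : Fact p.Prime := ⟨hp⟩
  obtain ⟨x, hxW, y0, hy0W, hc⟩ := hnt
  set c : ZMod p := symp g (ZMod p) x y0 with hcdef
  set y : Fin (2 * g) → ZMod p := c⁻¹ • y0 with hydef
  have hyW : y ∈ W := W.smul_mem _ hy0W
  have hxy : symp g (ZMod p) x y = 1 := by
    rw [hydef, symp_smul, ← hcdef, inv_mul_cancel₀ hc]
  have hxne : ∃ i, x i ≠ 0 := by
    by_contra h
    push_neg at h
    have hx0 : x = 0 := funext h
    rw [hx0] at hxy
    simp [symp] at hxy
  obtain ⟨i, hi⟩ := hxne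
  haveI : Nontrivial (Fin (2 * g)) := by
    rw [Fin.nontrivial_iff_two_le]; omega
  obtain ⟨j, hj⟩ := exists_ne i
  -- integer lifts
  set L : Fin (2 * g) → ℤ := fun k => ((x k).val : ℤ) with hLdef
  set M : Fin (2 * g) → ℤ := fun k => ((y k).val : ℤ) with hMdef
  have hLred : ∀ k, ((L k : ℤ) : ZMod p) = x k := by
    intro k; simp [hLdef, ZMod.natCast_val, ZMod.cast_id]
  have hMred : ∀ k, ((M k : ℤ) : ZMod p) = y k := by
    intro k; simp [hMdef, ZMod.natCast_val, ZMod.cast_id]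
  set m : ℤ := L i with hmdef
  have hval0 : (x i).val ≠ 0 := fun h => hi ((ZMod.val_eq_zero _).mp h)
  have hcopN : Nat.Coprime p (x i).val := by
    refine (hp.coprime_iff_not_dvd).mpr fun hd => ?_
    have h1 := Nat.le_of_dvd (Nat.pos_of_ne_zero hval0) hd
    have h2 := ZMod.val_lt (x i)
    omega
  have hcop : IsCoprime (p : ℤ) m := by
    rw [hmdef, hLdef]
    exact Nat.isCoprime_iff_coprime.mpr hcopN
  obtain ⟨u, v, huv⟩ := hcop
  -- the first vector
  set s : ℤ := -v * (1 - L j) with hsdef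
  set b₁ : Fin (2 * g) → ℤ := fun k => L k + if k = j then p * (u * (1 - L j)) else 0
    with hb₁def
  have hij : i ≠ j := Ne.symm hj
  have hb₁i : b₁ i = m := by simp [hb₁def, hij, hmdef]
  have hb₁j : b₁ j = 1 + m * s := by
    have hbj : b₁ j = L j + p * (u * (1 - L j)) := by simp [hb₁def]
    rw [hbj, hsdef]
    linear_combination (1 - L j) * huv
  have hb₁red : ∀ k, ((b₁ k : ℤ) : ZMod p) = x k := by
    intro k
    simp only [hb₁def]
    push_cast
    rw [ZMod.natCast_self]
    rcases eq_or_ne k j with h | h <;> simp [h, hLred]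
  -- the auxiliary vector w with symp b₁ w = 1
  set w : Fin (2 * g) → ℤ :=
    (Pi.single (sg i) (sympJ g ℤ i (sg i) * (-s))) + (Pi.single (sg j) (sympJ g ℤ j (sg j)))
    with hwdef
  have hsymp_w : symp g ℤ b₁ w = 1 := by
    rw [hwdef, symp_add, symp_single, symp_single, sg_sg, sg_sg, hb₁i, hb₁j]
    have e1 := sympJ_sq i
    have e2 := sympJ_sq j
    linear_combination (m * -s) * e1 + (1 + m * s) * e2
  -- the second vector
  set b₂ : Fin (2 * g) → ℤ := M with hb₂def
  set S : ℤ := symp g ℤ b₁ b₂ with hSdef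
  have hSred : ((S : ℤ) : ZMod p) = 1 := by
    rw [hSdef, symp_cast]
    have h1 : (fun k => ((b₁ k : ℤ) : ZMod p)) = x := funext hb₁red
    have h2 : (fun k => ((b₂ k : ℤ) : ZMod p)) = y := funext hMred
    rw [h1, h2, hxy]
  have hdvd : (p : ℤ) ∣ (S - 1) := by
    rw [← ZMod.intCast_zmod_eq_zero_iff_dvd]
    push_cast
    rw [hSred]
    try ring
  set a₂ : Fin (2 * g) → ℤ := fun k => b₂ k - (S - 1) * w k with ha₂def
  have hsymp : symp g ℤ b₁ a₂ = 1 := by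
    rw [ha₂def, symp_sub_mul, ← hSdef, hsymp_w]
    try ring
  have ha₂red : ∀ k, ((a₂ k : ℤ) : ZMod p) = y k := by
    intro k
    simp only [ha₂def]
    push_cast
    rw [hSred, hMred k]
    ring
  -- gcd facts
  have hgcd₁ : Finset.univ.gcd b₁ = 1 := by
    have hd : Finset.univ.gcd b₁ ∣ 1 := by
      rw [← hsymp]
      unfold symp
      refine Finset.dvd_sum fun k _ => Finset.dvd_sum fun l _ => ?_
      exact Dvd.dvd.mul_right (Dvd.dvd.mul_right (Finset.gcd_dvd (Finset.mem_univ k)) _) _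
    rcases Int.isUnit_iff.mp (isUnit_of_dvd_one hd) with h | h
    · exact h
    · have hn := Finset.normalize_gcd (s := (Finset.univ : Finset (Fin (2*g)))) (f := b₁)
      have := Int.nonneg_of_normalize_eq_self hn
      omega
  have hgcd₂ : Finset.univ.gcd a₂ = 1 := by
    have hd : Finset.univ.gcd a₂ ∣ 1 := by
      rw [← hsymp]
      unfold symp
      refine Finset.dvd_sum fun k _ => Finset.dvd_sum fun l _ => ?_
      exact Dvd.dvd.mul_left (Finset.gcd_dvd (Finset.mem_univ l)) _
    rcases Int.isUnit_iff.mp (isUnit_of_dvd_one hd) with h | h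
    · exact h
    · have hn := Finset.normalize_gcd (s := (Finset.univ : Finset (Fin (2*g)))) (f := a₂)
      have := Int.nonneg_of_normalize_eq_self hn
      omega
  refine ⟨b₁, a₂, hgcd₁, hgcd₂, hsymp, ?_, ?_⟩
  · have h1 : (fun k => ((b₁ k : ℤ) : ZMod p)) = x := funext hb₁red
    rw [h1]; exact hxW
  · have h2 : (fun k => ((a₂ k : ℤ) : ZMod p)) = y := funext ha₂red
    rw [h2]; exact hyW
end
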